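/- Let K : [0,∞) → L(Y) with ‖K(t)‖ ≤ Q e^{-ωt}, Q ≥ 0, ω > 0, and let g : [0,∞) → Y be continuous and bounded. Then limsup_{t→∞} ‖(K∗g)(t)‖ ≤ (Q/ω) · limsup_{t→∞} ‖g(t)‖. -/

import Mathlib

open Filter MeasureTheory intervalIntegral Real

lemma exp_int_le {ω : ℝ} (hω : 0 < ω) (a b : ℝ) :
    (∫ τ in a..b, Real.exp (-ω * (b - τ))) ≤ 1 / ω := by
  have key : ∀ τ ∈ Set.uIcc a b, HasDerivAt (fun τ => ω⁻¹ * Real.exp (-ω * (b - τ)))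
      (Real.exp (-ω * (b - τ))) τ := by
    intro τ _
    have h1 : HasDerivAt (fun τ : ℝ => -ω * (b - τ)) ω τ := by
      have := ((hasDerivAt_id τ).const_sub b).const_mul (-ω)
      simpa using this
    have h2 := (h1.exp).const_mul ω⁻¹
    exact h2.congr_deriv (by rw [mul_comm (Real.exp _) ω, ← mul_assoc, inv_mul_cancel₀ hω.ne', one_mul])
  have hcont : Continuous fun τ : ℝ => Real.exp (-ω * (b - τ)) :=
    Real.continuous_exp.comp (continuous_const.mul (continuous_const.sub continuous_id))
  rw [intervalIntegral.integral_eq_sub_of_hasDerivAt key (hcont.intervalIntegrable a b)]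
  have h0 : Real.exp (-ω * (b - b)) = 1 := by simp
  rw [h0]
  have h1 : 0 ≤ Real.exp (-ω * (b - a)) := (Real.exp_pos _).le
  have h2 : 0 < ω⁻¹ := inv_pos.mpr hω
  rw [one_div]
  nlinarith

theorem stmt14 {Y : Type*} [NormedAddCommGroup Y] [NormedSpace ℝ Y] [CompleteSpace Y]
    (K : ℝ → Y →L[ℝ] Y) (g : ℝ → Y) (Q ω : ℝ) (hQ : 0 ≤ Q) (hω : 0 < ω)
    (hK : ∀ t ≥ (0:ℝ), ‖K t‖ ≤ Q * Real.exp (-ω * t))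
    (hg : Continuous g) (hgb : ∃ M, ∀ t, ‖g t‖ ≤ M)
    (hint : ∀ t ≥ (0:ℝ),
      IntervalIntegrable (fun τ => (K (t - τ)) (g τ)) MeasureTheory.volume 0 t) :
    Filter.limsup (fun t => ‖∫ τ in (0:ℝ)..t, (K (t - τ)) (g τ)‖) Filter.atTop
      ≤ (Q / ω) * Filter.limsup (fun t => ‖g t‖) Filter.atTop := by
  obtain ⟨M₀, hM₀⟩ := hgb
  set M := max M₀ 0 with hM
  have hMg : ∀ t, ‖g t‖ ≤ M := fun t => (hM₀ t).trans (le_max_left _ _)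
  have hM0 : 0 ≤ M := le_max_right _ _
  set L := limsup (fun t => ‖g t‖) atTop with hL
  have hbdd : IsBoundedUnder (· ≤ ·) atTop (fun t => ‖g t‖) :=
    Filter.isBoundedUnder_of ⟨M, fun t => hMg t⟩
  have hcob : IsCoboundedUnder (· ≤ ·) atTop
      (fun t => ‖∫ τ in (0:ℝ)..t, (K (t - τ)) (g τ)‖) := by
    apply Filter.IsBoundedUnder.isCoboundedUnder_le
    exact Filter.isBoundedUnder_of ⟨0, fun t => norm_nonneg _⟩
  refine le_of_forall_pos_le_add ?_
  intro ε hε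
  set ε' := ε * ω / (2 * (Q + 1)) with hε'def
  have hε'pos : 0 < ε' := by positivity
  have hQε' : Q / ω * ε' ≤ ε / 2 := by
    have h : Q / ω * ε' = Q * ε / (2 * (Q + 1)) := by
      rw [hε'def]; field_simp
    rw [h, div_le_div_iff₀ (by positivity) (by norm_num)]
    nlinarith
  have hev : ∀ᶠ t in atTop, ‖g t‖ < L + ε' :=
    Filter.eventually_lt_of_limsup_lt (by linarith) hbdd
  obtain ⟨T₀, hT₀⟩ := eventually_atTop.mp hev
  set T := max T₀ 0 with hTdef
  have hT0 : (0:ℝ) ≤ T := le_max_right _ _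
  have hTg : ∀ τ, T ≤ τ → ‖g τ‖ < L + ε' := fun τ hτ => hT₀ τ ((le_max_left _ _).trans hτ)
  have hLε : 0 ≤ L + ε' := (norm_nonneg _).trans (hTg T le_rfl).le
  -- the first-part bound tends to 0
  have htend : Tendsto (fun t : ℝ => Q * Real.exp (-ω * (t - T)) * M * T) atTop (nhds 0) := by
    have h0 : Tendsto (fun t : ℝ => -ω * (t - T)) atTop atBot := by
      have hlin : Tendsto (fun t : ℝ => t - T) atTop atTop :=
        tendsto_atTop_add_const_right atTop (-T) tendsto_id
      exact hlin.const_mul_atTop_of_neg (by linarith)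
    have h1 : Tendsto (fun t : ℝ => Real.exp (-ω * (t - T))) atTop (nhds 0) :=
      Real.tendsto_exp_atBot.comp h0
    have h2 := ((h1.const_mul Q).mul_const M).mul_const T
    simpa using h2
  have hev2 : ∀ᶠ t in atTop, Q * Real.exp (-ω * (t - T)) * M * T ≤ ε / 2 :=
    htend.eventually (ge_mem_nhds (by linarith))
  apply Filter.limsup_le_of_le hcob
  filter_upwards [hev2, eventually_ge_atTop T] with t h2t htT
  have ht0 : (0:ℝ) ≤ t := hT0.trans htT
  -- split the integral
  have hi1 : IntervalIntegrable (fun τ => (K (t - τ)) (g τ)) volume 0 T :=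
    (hint t ht0).mono_set (by rw [Set.uIcc_of_le hT0, Set.uIcc_of_le ht0]
                              exact Set.Icc_subset_Icc le_rfl htT)
  have hi2 : IntervalIntegrable (fun τ => (K (t - τ)) (g τ)) volume T t :=
    (hint t ht0).mono_set (by rw [Set.uIcc_of_le htT, Set.uIcc_of_le ht0]
                              exact Set.Icc_subset_Icc hT0 le_rfl)
  have hsplit : (∫ τ in (0:ℝ)..t, (K (t - τ)) (g τ))
      = (∫ τ in (0:ℝ)..T, (K (t - τ)) (g τ)) + ∫ τ in T..t, (K (t - τ)) (g τ) :=
    (intervalIntegral.integral_add_adjacent_intervals hi1 hi2).symm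
  rw [hsplit]
  have hA : ‖∫ τ in (0:ℝ)..T, (K (t - τ)) (g τ)‖ ≤ Q * Real.exp (-ω * (t - T)) * M * T := by
    have := intervalIntegral.norm_integral_le_of_norm_le_const
      (a := 0) (b := T) (C := Q * Real.exp (-ω * (t - T)) * M)
      (f := fun τ => (K (t - τ)) (g τ)) ?_
    · calc ‖∫ τ in (0:ℝ)..T, (K (t - τ)) (g τ)‖
          ≤ Q * Real.exp (-ω * (t - T)) * M * |T - 0| := this
        _ = Q * Real.exp (-ω * (t - T)) * M * T := by rw [sub_zero, abs_of_nonneg hT0]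
    · intro x hx
      rw [Set.uIoc_of_le hT0] at hx
      have hx0 : 0 ≤ x := hx.1.le
      have hxT : x ≤ T := hx.2
      have htx : 0 ≤ t - x := by linarith
      have h1 : ‖(K (t - x)) (g x)‖ ≤ ‖K (t - x)‖ * ‖g x‖ := (K (t - x)).le_opNorm _
      have h2 : ‖K (t - x)‖ * ‖g x‖ ≤ (Q * Real.exp (-ω * (t - x))) * M :=
        mul_le_mul (hK _ htx) (hMg x) (norm_nonneg _)
          (by positivity)
      have h3 : Real.exp (-ω * (t - x)) ≤ Real.exp (-ω * (t - T)) :=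
        Real.exp_le_exp.mpr (by nlinarith)
      calc ‖(K (t - x)) (g x)‖ ≤ (Q * Real.exp (-ω * (t - x))) * M := h1.trans h2
        _ ≤ Q * Real.exp (-ω * (t - T)) * M :=
            mul_le_mul_of_nonneg_right (mul_le_mul_of_nonneg_left h3 hQ) hM0
  have hB : ‖∫ τ in T..t, (K (t - τ)) (g τ)‖ ≤ Q / ω * (L + ε') := by
    have hc : Continuous fun τ : ℝ => Q * (L + ε') * Real.exp (-ω * (t - τ)) :=
      continuous_const.mul (Real.continuous_exp.comp
        (continuous_const.mul (continuous_const.sub continuous_id)))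
    have hmaj : IntervalIntegrable (fun τ => Q * (L + ε') * Real.exp (-ω * (t - τ))) volume T t :=
      hc.intervalIntegrable T t
    have hbound := intervalIntegral.norm_integral_le_abs_of_norm_le
      (f := fun τ => (K (t - τ)) (g τ)) (a := T) (b := t)
      (g := fun τ => Q * (L + ε') * Real.exp (-ω * (t - τ))) ?_ hmaj
    · have hval : (∫ τ in T..t, Q * (L + ε') * Real.exp (-ω * (t - τ)))
          = Q * (L + ε') * ∫ τ in T..t, Real.exp (-ω * (t - τ)) := by
        rw [intervalIntegral.integral_const_mul]
      have hIpos : 0 ≤ ∫ τ in T..t, Real.exp (-ω * (t - τ)) :=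
        intervalIntegral.integral_nonneg htT fun x _ => (Real.exp_pos _).le
      have hIle : (∫ τ in T..t, Real.exp (-ω * (t - τ))) ≤ 1 / ω := exp_int_le hω T t
      calc ‖∫ τ in T..t, (K (t - τ)) (g τ)‖
          ≤ |∫ τ in T..t, Q * (L + ε') * Real.exp (-ω * (t - τ))| := hbound
        _ = Q * (L + ε') * ∫ τ in T..t, Real.exp (-ω * (t - τ)) := by
            rw [hval, abs_of_nonneg (by positivity)]
        _ ≤ Q * (L + ε') * (1 / ω) := mul_le_mul_of_nonneg_left hIle (by positivity)
        _ = Q / ω * (L + ε') := by ring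
    · rw [MeasureTheory.ae_restrict_iff' measurableSet_uIoc]
      apply ae_of_all
      intro x hx
      rw [Set.uIoc_of_le htT] at hx
      have hTx : T ≤ x := hx.1.le
      have hxt : x ≤ t := hx.2
      have htx : 0 ≤ t - x := by linarith
      have h1 : ‖(K (t - x)) (g x)‖ ≤ ‖K (t - x)‖ * ‖g x‖ := (K (t - x)).le_opNorm _
      have h2 : ‖K (t - x)‖ * ‖g x‖ ≤ (Q * Real.exp (-ω * (t - x))) * (L + ε') :=
        mul_le_mul (hK _ htx) (hTg x hTx).le (norm_nonneg _) (by positivity)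
      calc ‖(K (t - x)) (g x)‖ ≤ (Q * Real.exp (-ω * (t - x))) * (L + ε') := h1.trans h2
        _ = Q * (L + ε') * Real.exp (-ω * (t - x)) := by ring
  calc ‖(∫ τ in (0:ℝ)..T, (K (t - τ)) (g τ)) + ∫ τ in T..t, (K (t - τ)) (g τ)‖
      ≤ ‖∫ τ in (0:ℝ)..T, (K (t - τ)) (g τ)‖ + ‖∫ τ in T..t, (K (t - τ)) (g τ)‖ :=
        norm_add_le _ _
    _ ≤ ε / 2 + Q / ω * (L + ε') := add_le_add (hA.trans h2t) hB
    _ = Q / ω * L + (Q / ω * ε' + ε / 2) := by ring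
    _ ≤ Q / ω * L + ε := by linarith
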